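/- Let G be a group, p a prime, N ⊴ G a normal subgroup, and N' the subgroup generated by [N,N] and p-th powers of elements of N. Then for all x ∈ G, y ∈ N and n ≥ 1: the p^n-fold iterated commutator [x,[x,[…[x,y]…]]] (with p^n occurrences of x) is congruent to [x^{p^n}, y] modulo N'. -/

import Mathlib

/-- The group commutator [a,b] = a⁻¹b⁻¹ab. -/
def gcomm {G : Type*} [Group G] (a b : G) : G := a⁻¹ * b⁻¹ * a * b

/-- The subgroup N' generated by [N,N] and p-th powers of elements of N. -/
def derp {G : Type*} [Group G] (N : Subgroup G) (p : ℕ) : Subgroup G :=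
  Subgroup.closure ({x | ∃ a ∈ N, ∃ b ∈ N, x = gcomm a b} ∪ {x | ∃ a ∈ N, x = a ^ p})

section Aux

variable {G : Type*} [Group G] (N : Subgroup G) (p : ℕ)

lemma gcomm_mem {a b : G} (ha : a ∈ N) (hb : b ∈ N) : gcomm a b ∈ N :=
  N.mul_mem (N.mul_mem (N.mul_mem (N.inv_mem ha) (N.inv_mem hb)) ha) hb

lemma gcomm_mem_derp {a b : G} (ha : a ∈ N) (hb : b ∈ N) : gcomm a b ∈ derp N p :=
  Subgroup.subset_closure (Or.inl ⟨a, ha, b, hb, rfl⟩)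

lemma pow_mem_derp {a : G} (ha : a ∈ N) : a ^ p ∈ derp N p :=
  Subgroup.subset_closure (Or.inr ⟨a, ha, rfl⟩)

lemma derp_le : derp N p ≤ N := by
  refine (Subgroup.closure_le N).mpr ?_
  rintro z (⟨a, ha, b, hb, rfl⟩ | ⟨a, ha, rfl⟩)
  · exact gcomm_mem N ha hb
  · exact N.pow_mem ha p

lemma derp_normal (hN : N.Normal) : (derp N p).Normal := by
  constructor
  intro h hh g
  have key : (derp N p).map (MulAut.conj g).toMonoidHom ≤ derp N p := by
    rw [derp, MonoidHom.map_closure]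
    refine (Subgroup.closure_le _).mpr ?_
    rintro z ⟨w, hw, rfl⟩
    rcases hw with ⟨a, ha, b, hb, rfl⟩ | ⟨a, ha, rfl⟩
    · have heq : (MulAut.conj g).toMonoidHom (gcomm a b) =
        gcomm (g * a * g⁻¹) (g * b * g⁻¹) := by
        simp only [gcomm, MulEquiv.coe_toMonoidHom, map_mul, map_inv, MulAut.conj_apply]
      rw [heq]
      exact gcomm_mem_derp N p (hN.conj_mem a ha g) (hN.conj_mem b hb g)
    · have heq : (MulAut.conj g).toMonoidHom (a ^ p) = (g * a * g⁻¹) ^ p := by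
        simp only [MulEquiv.coe_toMonoidHom, map_pow, MulAut.conj_apply]
      rw [heq]
      exact pow_mem_derp N p (hN.conj_mem a ha g)
  have h1 : (MulAut.conj g).toMonoidHom h ∈ (derp N p).map (MulAut.conj g).toMonoidHom :=
    Subgroup.mem_map_of_mem _ hh
  have h2 := key h1
  simpa [MulAut.conj_apply] using h2

end Aux

/-- The p^n-fold iterated commutator [x,[x,…,[x,y]…]] is congruent to [x^{p^n}, y]
    modulo N' = [N,N]·Nᵖ, for x ∈ G, y ∈ N. -/
theorem iterated_commutator_pow (G : Type*) [Group G] (p : ℕ) [Fact p.Prime] (n : ℕ)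
    (hn : 1 ≤ n) (N : Subgroup G) (hN : N.Normal) (x : G) (y : G) (hy : y ∈ N) :
    ((fun z => gcomm x z)^[p ^ n] y)⁻¹ * gcomm (x ^ p ^ n) y ∈ derp N p := by
  have hp : p.Prime := Fact.out
  have hle : derp N p ≤ N := derp_le N p
  have hnorm : (derp N p).Normal := derp_normal N p hN
  letI : ((derp N p).subgroupOf N).Normal := hnorm.subgroupOf N
  set Q := N ⧸ (derp N p).subgroupOf N with hQ
  let π : N →* Q := QuotientGroup.mk' ((derp N p).subgroupOf N)
  -- commutativity of Q
  letI : CommGroup Q :=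
    { (inferInstance : Group Q) with
      mul_comm := by
        intro a b
        induction a using QuotientGroup.induction_on with | H a =>
        induction b using QuotientGroup.induction_on with | H b =>
        rw [← QuotientGroup.mk_mul, ← QuotientGroup.mk_mul, QuotientGroup.eq]
        rw [Subgroup.mem_subgroupOf]
        have heq : (((a * b)⁻¹ * (b * a) : N) : G) = gcomm (b : G) (a : G) := by
          push_cast
          rw [gcomm]
          group
        rw [heq]
        exact gcomm_mem_derp N p b.2 a.2 }
  -- conjugation by x on N
  let τ : N →* N :=
    { toFun := fun a => ⟨x⁻¹ * (a : G) * x, by simpa using hN.conj_mem (a : G) a.2 x⁻¹⟩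
      map_one' := by ext; simp
      map_mul' := by intro a b; ext; push_cast; group }
  have hτ : (derp N p).subgroupOf N ≤ ((derp N p).subgroupOf N).comap τ := by
    intro a ha
    rw [Subgroup.mem_subgroupOf] at ha
    rw [Subgroup.mem_comap, Subgroup.mem_subgroupOf]
    have := hnorm.conj_mem (a : G) ha x⁻¹
    simp only [inv_inv] at this
    exact this
  let T : Q →* Q := QuotientGroup.map _ _ τ hτ
  have hT : ∀ a : N, T (π a) = π (τ a) := fun a => rfl
  -- the additive endomorphism
  let TE : AddMonoid.End (Additive Q) := MonoidHom.toAdditive T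
  have hTE : ∀ q : Q, TE (Additive.ofMul q) = Additive.ofMul (T q) := fun q => rfl
  -- exponent p
  have hexp : ∀ q : Q, q ^ p = 1 := by
    intro q
    induction q using QuotientGroup.induction_on with | H a =>
    rw [← QuotientGroup.mk_pow, QuotientGroup.eq_one_iff]
    rw [Subgroup.mem_subgroupOf]
    have heq : ((a ^ p : N) : G) = (a : G) ^ p := rfl
    rw [heq]
    exact pow_mem_derp N p a.2
  -- p = 0 in the endomorphism ring
  have hp0 : (p : AddMonoid.End (Additive Q)) = 0 := by
    refine AddMonoidHom.ext fun m => ?_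
    show p • m = (0 : Additive Q)
    have heq : p • m = Additive.ofMul (m.toMul ^ p) := (ofMul_pow p m.toMul).symm
    rw [heq, hexp]
    rfl
  -- the characteristic-p binomial identity
  have hkey : (1 - TE) ^ (p ^ n) = 1 - TE ^ (p ^ n) := by
    rcases subsingleton_or_nontrivial (AddMonoid.End (Additive Q)) with hs | hnt
    · exact Subsingleton.elim _ _
    · have hdvd : ringChar (AddMonoid.End (Additive Q)) ∣ p := ringChar.dvd hp0
      have hchar : ringChar (AddMonoid.End (Additive Q)) = p := by
        rcases hp.eq_one_or_self_of_dvd _ hdvd with h1 | h1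
        · exact absurd h1 CharP.ringChar_ne_one
        · exact h1
      haveI : CharP (AddMonoid.End (Additive Q)) p := ringChar.of_eq hchar
      haveI : ExpChar (AddMonoid.End (Additive Q)) p := .prime hp
      have hsp := sub_pow_char_pow_of_commute p n (Commute.one_left TE)
      rw [one_pow] at hsp
      exact hsp
  -- membership of iterates
  have hgm' : ∀ (g w : G), w ∈ N → gcomm g w ∈ N := by
    intro g w hw
    have h1 : g⁻¹ * w⁻¹ * g ∈ N := by
      simpa [mul_assoc] using hN.conj_mem w⁻¹ (N.inv_mem hw) g⁻¹
    have heq : gcomm g w = (g⁻¹ * w⁻¹ * g) * w := by rw [gcomm]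
    rw [heq]
    exact N.mul_mem h1 hw
  have hgm : ∀ w ∈ N, gcomm x w ∈ N := fun w hw => hgm' x w hw
  have hmem : ∀ m, (fun z => gcomm x z)^[m] y ∈ N := by
    intro m
    induction m with
    | zero => simpa using hy
    | succ m ih =>
      rw [Function.iterate_succ_apply']
      exact hgm _ ih
  -- single commutator step
  have hstep : ∀ (w : N), Additive.ofMul (π ⟨gcomm x (w : G), hgm _ w.2⟩) =
      Additive.ofMul (π w) - TE (Additive.ofMul (π w)) := by
    intro w
    have h1 : (⟨gcomm x (w : G), hgm _ w.2⟩ : N) = (τ w)⁻¹ * w := by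
      ext
      show gcomm x (w : G) = (x⁻¹ * (w : G) * x)⁻¹ * w
      rw [gcomm]; group
    rw [h1, map_mul, map_inv, hTE, hT]
    show Additive.ofMul ((π (τ w))⁻¹ * π w) = Additive.ofMul (π w) - Additive.ofMul (π (τ w))
    rw [← ofMul_div, div_eq_mul_inv, mul_comm]
  -- iterate lemma
  have hiter : ∀ m, Additive.ofMul (π ⟨(fun z => gcomm x z)^[m] y, hmem m⟩) =
      ((1 - TE) ^ m) (Additive.ofMul (π ⟨y, hy⟩)) := by
    intro m
    induction m with
    | zero => rw [pow_zero]; rfl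
    | succ m ih =>
      have hsub : (⟨(fun z => gcomm x z)^[m+1] y, hmem (m+1)⟩ : N) =
          ⟨gcomm x ((⟨(fun z => gcomm x z)^[m] y, hmem m⟩ : N) : G), hgm _ (hmem m)⟩ := by
        ext
        show (fun z => gcomm x z)^[m+1] y = gcomm x ((fun z => gcomm x z)^[m] y)
        rw [Function.iterate_succ_apply']
      rw [hsub, hstep, ih, pow_succ']
      show _ = ((1 - TE) * (1 - TE) ^ m) (Additive.ofMul (π ⟨y, hy⟩))
      have hmul : ((1 - TE) * (1 - TE) ^ m) (Additive.ofMul (π ⟨y, hy⟩)) =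
          (1 - TE) (((1 - TE) ^ m) (Additive.ofMul (π ⟨y, hy⟩))) := rfl
      rw [hmul]
      rfl
  -- powers of T
  have hTpow : ∀ m, ∀ (a : G) (ha : a ∈ N),
      (TE ^ m) (Additive.ofMul (π ⟨a, ha⟩)) =
        Additive.ofMul (π ⟨(x ^ m)⁻¹ * a * x ^ m, by
          simpa using hN.conj_mem a ha (x ^ m)⁻¹⟩) := by
    intro m
    induction m with
    | zero =>
      intro a ha
      rw [pow_zero, AddMonoid.End.one_apply]
      congr 1
      congr 1
      ext
      simp
    | succ m ih =>
      intro a ha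
      rw [pow_succ']
      have hmul : ((TE * TE ^ m)) (Additive.ofMul (π ⟨a, ha⟩)) =
          TE ((TE ^ m) (Additive.ofMul (π ⟨a, ha⟩))) := rfl
      rw [hmul, ih, hTE, hT]
      congr 1
      congr 1
      ext
      show x⁻¹ * ((x ^ m)⁻¹ * a * x ^ m) * x = (x ^ (m + 1))⁻¹ * a * x ^ (m + 1)
      rw [pow_succ]
      group
  -- the commutator with x^m
  have hpow : ∀ m, Additive.ofMul (π ⟨gcomm (x ^ m) y, hgm' (x ^ m) y hy⟩) =
      ((1 : AddMonoid.End (Additive Q)) - TE ^ m) (Additive.ofMul (π ⟨y, hy⟩)) := by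
    intro m
    have h1 : (⟨gcomm (x ^ m) y, hgm' (x ^ m) y hy⟩ : N) =
        (⟨(x ^ m)⁻¹ * y * x ^ m, by
          simpa using hN.conj_mem y hy (x ^ m)⁻¹⟩ : N)⁻¹ * ⟨y, hy⟩ := by
      ext
      show gcomm (x ^ m) y = ((x ^ m)⁻¹ * y * x ^ m)⁻¹ * y
      rw [gcomm]; group
    rw [h1, map_mul, map_inv, show ((1 : AddMonoid.End (Additive Q)) - TE ^ m) (Additive.ofMul (π ⟨y, hy⟩)) =
      Additive.ofMul (π ⟨y, hy⟩) - (TE ^ m) (Additive.ofMul (π ⟨y, hy⟩)) from rfl,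
      hTpow m y hy]
    rw [← ofMul_div, div_eq_mul_inv, mul_comm]
  -- conclusion
  have hfinal : π ⟨(fun z => gcomm x z)^[p ^ n] y, hmem (p ^ n)⟩ =
      π ⟨gcomm (x ^ p ^ n) y, hgm' (x ^ p ^ n) y hy⟩ := by
    have h3 : Additive.ofMul (π ⟨(fun z => gcomm x z)^[p ^ n] y, hmem (p ^ n)⟩) =
        Additive.ofMul (π ⟨gcomm (x ^ p ^ n) y, hgm' (x ^ p ^ n) y hy⟩) := by
      rw [hiter (p ^ n), hkey, hpow (p ^ n)]
    exact Additive.ofMul.injective h3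
  have h5 : ((⟨(fun z => gcomm x z)^[p ^ n] y, hmem (p ^ n)⟩ : N)⁻¹ *
      ⟨gcomm (x ^ p ^ n) y, hgm' (x ^ p ^ n) y hy⟩ : N) ∈ (derp N p).subgroupOf N :=
    (QuotientGroup.eq).mp hfinal
  rw [Subgroup.mem_subgroupOf] at h5
  simpa using h5
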